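/- For any finitely supported multi-index ν, ∑_{m ≤ ν} C(ν, m) · |m|! · |ν − m|! = (|ν| + 1)!. -/

import Mathlib

open Finset Finsupp

private lemma fsum_add (f g : ℕ →₀ ℕ) :
    ((f + g).sum fun _ n => n) = (f.sum fun _ n => n) + (g.sum fun _ n => n) :=
  Finsupp.sum_add_index' (fun _ => rfl) (fun _ _ _ => rfl)

private lemma fsum_single (a b : ℕ) : ((Finsupp.single a b).sum fun _ n => n) = b :=
  Finsupp.sum_single_index rfl

private lemma Iic_zero_finsupp : (Finset.Iic (0 : ℕ →₀ ℕ)) = {0} := by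
  ext m; simp [Finset.mem_Iic, le_zero_iff]

/-- Splitting a sum over `Iic (single a b + ν)` when `ν a = 0`. -/
private lemma sum_Iic_single_add {M : Type*} [AddCommMonoid M] (a b : ℕ) (ν : ℕ →₀ ℕ)
    (ha : ν a = 0) (F : (ℕ →₀ ℕ) → M) :
    ∑ m ∈ Finset.Iic (Finsupp.single a b + ν), F m
      = ∑ i ∈ Finset.range (b + 1), ∑ m ∈ Finset.Iic ν, F (Finsupp.single a i + m) := by
  rw [← Finset.sum_product' (Finset.range (b+1)) (Finset.Iic ν)
    (fun i m => F (Finsupp.single a i + m))]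
  refine Finset.sum_nbij' (fun m => (m a, m.erase a)) (fun p => Finsupp.single a p.1 + p.2)
    ?_ ?_ ?_ ?_ ?_
  · intro m hm
    rw [Finset.mem_Iic] at hm
    have h1 : ∀ j, m j ≤ (Finsupp.single a b + ν) j := fun j => Finsupp.le_def.mp hm j
    rw [Finset.mem_product, Finset.mem_range, Finset.mem_Iic]
    constructor
    · have := h1 a
      simp [Finsupp.single_apply, ha] at this
      omega
    · rw [Finsupp.le_def]
      intro j
      by_cases hj : j = a
      · subst hj; simp [Finsupp.erase_apply]
      · have := h1 j
        simp [Finsupp.erase_apply, hj, Finsupp.single_apply, Ne.symm hj] at this ⊢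
        exact this
  · intro p hp
    rw [Finset.mem_product, Finset.mem_range, Finset.mem_Iic] at hp
    rw [Finset.mem_Iic]
    exact add_le_add (Finsupp.single_le_single.mpr (by omega)) hp.2
  · intro m hm
    exact Finsupp.single_add_erase a m
  · intro p hp
    rw [Finset.mem_product, Finset.mem_range, Finset.mem_Iic] at hp
    have hpa : p.2 a = 0 := by
      have := Finsupp.le_def.mp hp.2 a
      omega
    have h1 : (Finsupp.single a p.1 + p.2) a = p.1 := by
      simp [Finsupp.single_apply, hpa]
    have h2 : (Finsupp.single a p.1 + p.2).erase a = p.2 := by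
      rw [Finsupp.erase_add, Finsupp.erase_single,
        Finsupp.erase_of_notMem_support (by simp [Finsupp.mem_support_iff, hpa]), zero_add]
    rw [h1, h2]
  · intro m hm
    rw [Finsupp.single_add_erase a m]

/-- The multi-index Vandermonde-type fiber count. -/
private lemma choose_fiber (ν : ℕ →₀ ℕ) (k : ℕ) :
    ∑ m ∈ Finset.Iic ν,
      (if (m.sum fun _ n => n) = k then ∏ j ∈ ν.support, (ν j).choose (m j) else 0)
      = (ν.sum fun _ n => n).choose k := by
  induction ν using Finsupp.induction generalizing k with
  | zero =>
    rw [Iic_zero_finsupp, Finset.sum_singleton]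
    simp only [Finsupp.sum_zero_index, Finsupp.support_zero, Finset.prod_empty]
    cases k with
    | zero => simp
    | succ k => simp
  | single_add a b f haf hb ih =>
    have hfa : f a = 0 := Finsupp.notMem_support_iff.mp haf
    rw [sum_Iic_single_add a b f hfa]
    have hsupp : (Finsupp.single a b + f).support = insert a f.support := by
      rw [Finsupp.support_add_eq, Finsupp.support_single_ne_zero a hb]
      · ext j; simp [or_comm]
      · rw [Finsupp.support_single_ne_zero a hb]
        simp [Finset.disjoint_singleton_left, haf]
    have hval : ∀ j, (Finsupp.single a b + f) j = if j = a then b else f j := by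
      intro j
      by_cases hj : j = a
      · subst hj; simp [hfa]
      · simp [Finsupp.single_apply, Ne.symm hj, hj]
    -- compute the inner sums
    have key : ∀ i ∈ Finset.range (b + 1),
        (∑ m ∈ Finset.Iic f,
          if ((Finsupp.single a i + m).sum fun _ n => n) = k then
            ∏ j ∈ (Finsupp.single a b + f).support,
              ((Finsupp.single a b + f) j).choose ((Finsupp.single a i + m) j) else 0)
        = b.choose i * (if i ≤ k then (f.sum fun _ n => n).choose (k - i) else 0) := by
      intro i hi
      have step : ∀ m ∈ Finset.Iic f,
          (if ((Finsupp.single a i + m).sum fun _ n => n) = k then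
            ∏ j ∈ (Finsupp.single a b + f).support,
              ((Finsupp.single a b + f) j).choose ((Finsupp.single a i + m) j) else 0)
          = b.choose i * (if i ≤ k ∧ (m.sum fun _ n => n) = k - i then
              ∏ j ∈ f.support, (f j).choose (m j) else 0) := by
        intro m hm
        rw [Finset.mem_Iic] at hm
        have hma : m a = 0 := by have := Finsupp.le_def.mp hm a; omega
        have hsum : ((Finsupp.single a i + m).sum fun _ n => n)
            = i + (m.sum fun _ n => n) := by rw [fsum_add, fsum_single]
        have hprod : (∏ j ∈ (Finsupp.single a b + f).support,
              ((Finsupp.single a b + f) j).choose ((Finsupp.single a i + m) j))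
            = b.choose i * ∏ j ∈ f.support, (f j).choose (m j) := by
          rw [hsupp, Finset.prod_insert haf]
          congr 1
          · rw [hval a]; simp [Finsupp.single_apply, hma]
          · refine Finset.prod_congr rfl fun j hj => ?_
            have hja : j ≠ a := fun h => haf (h ▸ hj)
            rw [hval j]
            simp [hja, Finsupp.single_apply, Ne.symm hja]
        rw [hsum, hprod]
        by_cases hik : i ≤ k ∧ (m.sum fun _ n => n) = k - i
        · rw [if_pos hik, if_pos (by omega)]
        · rw [if_neg hik, if_neg (by omega), mul_zero]
      rw [Finset.sum_congr rfl step, ← Finset.mul_sum]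
      congr 1
      by_cases hik : i ≤ k
      · simp only [hik, true_and, if_true]
        exact ih (k - i)
      · simp [hik]
    rw [Finset.sum_congr rfl key]
    rw [fsum_add, fsum_single, Nat.add_choose_eq,
      Finset.Nat.sum_antidiagonal_eq_sum_range_succ_mk]
    -- both sides extend to range (b + k + 1)
    rw [show ∑ i ∈ Finset.range (k + 1),
          b.choose (i, k - i).1 * (f.sum fun _ n => n).choose (i, k - i).2
        = ∑ i ∈ Finset.range (k + 1),
          b.choose i * (if i ≤ k then (f.sum fun _ n => n).choose (k - i) else 0) from
      Finset.sum_congr rfl fun i hi => by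
        rw [Finset.mem_range] at hi; simp [Nat.lt_succ_iff.mp hi]]
    refine (Finset.sum_subset (Finset.range_subset_range.mpr (by omega)) ?_).trans
      (Finset.sum_subset (Finset.range_subset_range.mpr (by omega) :
        Finset.range (k+1) ⊆ Finset.range (b+k+2)) ?_).symm
    · intro i _ hi
      rw [Finset.mem_range, not_lt] at hi
      rw [Nat.choose_eq_zero_of_lt (by omega), zero_mul]
    · intro i _ hi
      rw [Finset.mem_range, not_lt] at hi
      rw [if_neg (by omega), mul_zero]

theorem sum_multiindex_factorial_one (ν : ℕ →₀ ℕ) :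
    ∑ m ∈ Finset.Iic ν,
      (∏ j ∈ ν.support, (ν j).choose (m j)) *
        Nat.factorial (m.sum fun _ n => n) *
        Nat.factorial ((ν - m).sum fun _ n => n)
    = Nat.factorial ((ν.sum fun _ n => n) + 1) := by
  set n := ν.sum fun _ n => n with hn
  have hsub : ∀ m ∈ Finset.Iic ν, ((ν - m).sum fun _ n => n) = n - (m.sum fun _ n => n) ∧
      (m.sum fun _ n => n) ≤ n := by
    intro m hm
    rw [Finset.mem_Iic] at hm
    have h1 : m + (ν - m) = ν := add_tsub_cancel_of_le hm
    have h2 : (m.sum fun _ n => n) + ((ν - m).sum fun _ n => n) = n := by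
      rw [← fsum_add, h1]
    omega
  -- Step 1: rewrite each term using a sum over fibers
  have step1 : ∀ m ∈ Finset.Iic ν,
      (∏ j ∈ ν.support, (ν j).choose (m j)) *
        Nat.factorial (m.sum fun _ n => n) *
        Nat.factorial ((ν - m).sum fun _ n => n)
      = ∑ k ∈ Finset.range (n + 1),
          (if (m.sum fun _ n => n) = k then ∏ j ∈ ν.support, (ν j).choose (m j) else 0) *
            (Nat.factorial k * Nat.factorial (n - k)) := by
    intro m hm
    obtain ⟨h1, h2⟩ := hsub m hm
    rw [Finset.sum_eq_single (m.sum fun _ n => n)]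
    · rw [if_pos rfl, h1, mul_assoc]
    · intro k _ hk
      rw [if_neg (Ne.symm hk), zero_mul]
    · intro h
      exact absurd (Finset.mem_range.mpr (by omega)) h
  rw [Finset.sum_congr rfl step1, Finset.sum_comm]
  have step2 : ∀ k ∈ Finset.range (n + 1),
      (∑ m ∈ Finset.Iic ν,
        (if (m.sum fun _ n => n) = k then ∏ j ∈ ν.support, (ν j).choose (m j) else 0) *
          (Nat.factorial k * Nat.factorial (n - k)))
      = Nat.factorial n := by
    intro k hk
    rw [Finset.mem_range] at hk
    rw [← Finset.sum_mul, choose_fiber ν k, ← hn]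
    rw [← mul_assoc]
    exact Nat.choose_mul_factorial_mul_factorial (by omega)
  rw [Finset.sum_congr rfl step2, Finset.sum_const, Finset.card_range, smul_eq_mul,
    Nat.factorial_succ]
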